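/- Let l, k be positive integers and α a real number with 0 < α < 2^(1/k), α ≠ 1, such that α^(l+k) − α^l is an integer in [1, 2^(l/k)). Then for every δ with α^k − 1 ≤ δ < 1, the identity ⌊⌊nα^l⌋·α^k + δ⌋ = ⌊nα^(l+k)⌋ holds for all integers n. -/
import Mathlib


theorem stmt_11 (l k : ℕ) (hl : 1 ≤ l) (hk : 1 ≤ k) (α : ℝ)
    (hα : 0 < α) (hα1 : α ≠ 1) (hα2 : α < (2 : ℝ) ^ ((1 : ℝ) / (k : ℝ)))
    (M : ℤ) (hM : α ^ (l + k) - α ^ l = (M : ℝ))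
    (hM1 : 1 ≤ (M : ℝ)) (hM2 : (M : ℝ) < (2 : ℝ) ^ ((l : ℝ) / (k : ℝ))) :
    ∀ δ : ℝ, α ^ k - 1 ≤ δ → δ < 1 →
      ∀ n : ℤ, ⌊(⌊(n : ℝ) * α ^ l⌋ : ℝ) * α ^ k + δ⌋ = ⌊(n : ℝ) * α ^ (l + k)⌋ := by
  intro δ hδ1 hδ2 n
  have hl0 : (0:ℝ) < α ^ l := pow_pos hα l
  have e : α ^ l * (α ^ k - 1) = (M : ℝ) := by rw [← hM, pow_add]; ring
  have hk1 : 1 < α ^ k := by nlinarith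
  set x := (n:ℝ) * α ^ l with hx
  have key : x * α ^ k = x + ((n * M : ℤ) : ℝ) := by
    have h3 : α ^ (l+k) = α ^ l + (M:ℝ) := by linarith
    rw [hx, mul_assoc, ← pow_add, h3]
    push_cast; ring
  have h2 : ⌊(n:ℝ) * α ^ (l+k)⌋ = ⌊x⌋ + n * M := by
    rw [pow_add, ← mul_assoc, ← hx, key, Int.floor_add_intCast]
  have hf0 : 0 ≤ Int.fract x := Int.fract_nonneg x
  have hf1 : Int.fract x < 1 := Int.fract_lt_one x
  have hfl : (⌊x⌋ : ℝ) = x - Int.fract x := by rw [Int.self_sub_fract]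
  push_cast at key
  have hprod : 0 ≤ (1 - Int.fract x) * (α ^ k - 1) :=
    mul_nonneg (by linarith) (by linarith)
  have hprod2 : 0 ≤ Int.fract x * (α ^ k - 1) :=
    mul_nonneg hf0 (by linarith)
  rw [h2, Int.floor_eq_iff]
  constructor
  · push_cast
    rw [hfl]
    nlinarith [key]
  · push_cast
    rw [hfl]
    nlinarith [key]
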